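/- Let (A, F, λ) be a bimonad in a 2-category K. If (X, ψ_X, φ_X) and (Y, ψ_Y, φ_Y) are strong Yetter–Drinfel'd modules over F (i.e. 1-endocells over F in Bimnd(K)), then their composite X∘Y, with ψ_{XY} and φ_{XY} defined by stacking the respective distributive laws, is again a strong Yetter–Drinfel'd module; consequently the category of strong Yetter–Drinfel'd modules ^F_F YD_s(K,A) = Bimnd(K)(F) is a (strict) monoidal category. -/
import Mathlib


open CategoryTheory Bicategory

namespace Paper

variable {K : Type*} [Bicategory K]

/-- A monad in a bicategory. -/
structure Mnd (a : K) where
  E : a ⟶ a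
  mul : E ≫ E ⟶ E
  unit : 𝟙 a ⟶ E
  assoc : (α_ E E E).inv ≫ mul ▷ E ≫ mul = E ◁ mul ≫ mul
  left_unit : (λ_ E).inv ≫ unit ▷ E ≫ mul = 𝟙 E
  right_unit : (ρ_ E).inv ≫ E ◁ unit ≫ mul = 𝟙 E

variable {a : K}

/-- Tensor (= horizontal composite) of two "unit elements". -/
def tunit {X Y : a ⟶ a} (u : 𝟙 a ⟶ X) (v : 𝟙 a ⟶ Y) : 𝟙 a ⟶ X ≫ Y :=
  (λ_ (𝟙 a)).inv ≫ u ▷ 𝟙 a ≫ X ◁ v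

/-- Multiplication on a composite `X ≫ Y` built from multiplications on `X`, `Y`
and a distributive law `d : Y ≫ X ⟶ X ≫ Y`. -/
def tmul {X Y : a ⟶ a} (mX : X ≫ X ⟶ X) (mY : Y ≫ Y ⟶ Y) (d : Y ≫ X ⟶ X ≫ Y) :
    (X ≫ Y) ≫ X ≫ Y ⟶ X ≫ Y :=
  (α_ X Y (X ≫ Y)).hom ≫ X ◁ ((α_ Y X Y).inv ≫ d ▷ Y ≫ (α_ X Y Y).hom) ≫
    (α_ X X (Y ≫ Y)).inv ≫ mX ▷ (Y ≫ Y) ≫ X ◁ mY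

/-- Comultiplication on a composite `X ≫ Y`. -/
def tcomul {X Y : a ⟶ a} (cX : X ⟶ X ≫ X) (cY : Y ⟶ Y ≫ Y) (d : X ≫ Y ⟶ Y ≫ X) :
    X ≫ Y ⟶ (X ≫ Y) ≫ X ≫ Y :=
  cX ▷ Y ≫ (α_ X X Y).hom ≫
    X ◁ (X ◁ cY ≫ (α_ X Y Y).inv ≫ d ▷ Y ≫ (α_ Y X Y).hom) ≫ (α_ X Y (X ≫ Y)).inv

/-- Extend distributive laws, moving `X` to the left across a composite `Y1 ≫ Y2`. -/
def dext {X Y1 Y2 : a ⟶ a} (d1 : Y1 ≫ X ⟶ X ≫ Y1) (d2 : Y2 ≫ X ⟶ X ≫ Y2) :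
    (Y1 ≫ Y2) ≫ X ⟶ X ≫ Y1 ≫ Y2 :=
  (α_ Y1 Y2 X).hom ≫ Y1 ◁ d2 ≫ (α_ Y1 X Y2).inv ≫ d1 ▷ Y2 ≫ (α_ X Y1 Y2).hom

/-- Extend distributive laws, moving `X` to the right across a composite `Y1 ≫ Y2`. -/
def dext' {X Y1 Y2 : a ⟶ a} (d1 : X ≫ Y1 ⟶ Y1 ≫ X) (d2 : X ≫ Y2 ⟶ Y2 ≫ X) :
    X ≫ Y1 ≫ Y2 ⟶ (Y1 ≫ Y2) ≫ X :=
  (α_ X Y1 Y2).inv ≫ d1 ▷ Y2 ≫ (α_ Y1 X Y2).hom ≫ Y1 ◁ d2 ≫ (α_ Y1 Y2 X).inv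

/-- Convolution product of `f g : 𝟙 a ⟶ T` with respect to a multiplication on `T`. -/
def conv {T : a ⟶ a} (m : T ≫ T ⟶ T) (f g : 𝟙 a ⟶ T) : 𝟙 a ⟶ T :=
  (λ_ (𝟙 a)).inv ≫ f ▷ 𝟙 a ≫ T ◁ g ≫ m

/-- Convolution product of `f g : T ⟶ 𝟙 a` with respect to a comultiplication on `T`. -/
def convC {T : a ⟶ a} (c : T ⟶ T ≫ T) (f g : T ⟶ 𝟙 a) : T ⟶ 𝟙 a :=
  c ≫ f ▷ T ≫ (λ_ T).hom ≫ g

/-- The multiplication on `E ≫ E ≫ E` built from `mul` and the distributive law `τ`. -/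
def mul3 {E : a ⟶ a} (mul : E ≫ E ⟶ E) (τ : E ≫ E ⟶ E ≫ E) :
    (E ≫ E ≫ E) ≫ E ≫ E ≫ E ⟶ E ≫ E ≫ E :=
  tmul mul (tmul mul mul τ) (dext τ τ)

/-- The multiplication on `E ≫ E ≫ E ≫ E`. -/
def mul4 {E : a ⟶ a} (mul : E ≫ E ⟶ E) (τ : E ≫ E ⟶ E ≫ E) :
    (E ≫ E ≫ E ≫ E) ≫ E ≫ E ≫ E ≫ E ⟶ E ≫ E ≫ E ≫ E :=
  tmul mul (mul3 mul τ) (dext τ (dext τ τ))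

/-- The comultiplication on `E ≫ E ≫ E`. -/
def comul3 {E : a ⟶ a} (comul : E ⟶ E ≫ E) (τ : E ≫ E ⟶ E ≫ E) :
    E ≫ E ≫ E ⟶ (E ≫ E ≫ E) ≫ E ≫ E ≫ E :=
  tcomul comul (tcomul comul comul τ) (dext' τ τ)

/-- The comultiplication on `E ≫ E ≫ E ≫ E`. -/
def comul4 {E : a ⟶ a} (comul : E ⟶ E ≫ E) (τ : E ≫ E ⟶ E ≫ E) :
    E ≫ E ≫ E ≫ E ⟶ (E ≫ E ≫ E ≫ E) ≫ E ≫ E ≫ E ≫ E :=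
  tcomul comul (comul3 comul τ) (dext' τ (dext' τ τ))

/-- "Action of `Q ≫ P` on `X ≫ Y`": `P` crosses `X` via `dPX`, then `Q` acts on `X`
and `P` acts on `Y`. -/
def actT {b : K} {P Q X : a ⟶ a} {Y : a ⟶ b}
    (dPX : P ≫ X ⟶ X ≫ P) (aQX : Q ≫ X ⟶ X) (aPY : P ≫ Y ⟶ Y) :
    (Q ≫ P) ≫ X ≫ Y ⟶ X ≫ Y :=
  (α_ Q P (X ≫ Y)).hom ≫ Q ◁ ((α_ P X Y).inv ≫ dPX ▷ Y ≫ (α_ X P Y).hom) ≫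
    (α_ Q X (P ≫ Y)).inv ≫ aQX ▷ (P ≫ Y) ≫ X ◁ aPY

/-- A (left) bimonad in a 2-category: a monad and a comonad structure on the same
1-cell, compatible through a 2-cell `lam : F ≫ F ⟶ F ≫ F` which is a 1-cell-datum
both in `Mnd(K)` and in `Comnd(K)`. -/
structure Bimonad (a : K) extends Mnd a where
  comul : E ⟶ E ≫ E
  counit : E ⟶ 𝟙 a
  coassoc : comul ≫ comul ▷ E ≫ (α_ E E E).hom = comul ≫ E ◁ comul
  left_counit : comul ≫ counit ▷ E ≫ (λ_ E).hom = 𝟙 E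
  right_counit : comul ≫ E ◁ counit ≫ (ρ_ E).hom = 𝟙 E
  lam : E ≫ E ⟶ E ≫ E
  /-- `(F, lam)` is a 1-cell datum in `Mnd(K)` -/
  lam_mul : E ◁ lam ≫ (α_ E E E).inv ≫ lam ▷ E ≫ (α_ E E E).hom ≫ E ◁ mul
      = (α_ E E E).inv ≫ mul ▷ E ≫ lam
  lam_unit : (λ_ E).inv ≫ unit ▷ E ≫ lam = (ρ_ E).inv ≫ E ◁ unit
  /-- `(F, lam)` is a 1-cell datum in `Comnd(K)` -/
  lam_comul : E ◁ comul ≫ (α_ E E E).inv ≫ lam ▷ E ≫ (α_ E E E).hom ≫ E ◁ lam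
      = lam ≫ comul ▷ E ≫ (α_ E E E).hom
  lam_counit : lam ≫ counit ▷ E ≫ (λ_ E).hom = E ◁ counit ≫ (ρ_ E).hom
  /-- compatibility of `mul` and `comul` through `lam` -/
  mul_comul : mul ≫ comul
      = E ◁ comul ≫ (α_ E E E).inv ≫ lam ▷ E ≫ (α_ E E E).hom ≫ E ◁ mul
  counit_mul : mul ≫ counit = E ◁ counit ≫ (ρ_ E).hom ≫ counit
  comul_unit : unit ≫ comul = (λ_ (𝟙 a)).inv ≫ unit ▷ 𝟙 a ≫ E ◁ unit
  counit_unit : unit ≫ counit = 𝟙 (𝟙 a)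

/-- The data of a (strong) Yetter–Drinfel'd module over a bimonad `F`:
a 1-cell `X` with 2-cells `ψ : F ≫ X ⟶ X ≫ F` and `φ : X ≫ F ⟶ F ≫ X`. -/
structure YDData {a : K} (F : Bimonad a) where
  X : a ⟶ a
  ψ : F.E ≫ X ⟶ X ≫ F.E
  φ : X ≫ F.E ⟶ F.E ≫ X

/-- The axioms of a strong Yetter–Drinfel'd module: `(X, ψ)` is a 1-cell datum in
`Mnd(K)`, `(X, φ)` is a 1-cell datum in `Comnd(K)`, and the three-strand
compatibility between `ψ`, `lam` and `φ` holds. -/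
def IsYDs {a : K} (F : Bimonad a) (M : YDData F) : Prop :=
  (F.E ◁ M.ψ ≫ (α_ F.E M.X F.E).inv ≫ M.ψ ▷ F.E ≫ (α_ M.X F.E F.E).hom ≫
      M.X ◁ F.mul = (α_ F.E F.E M.X).inv ≫ F.mul ▷ M.X ≫ M.ψ) ∧
  ((λ_ M.X).inv ≫ F.unit ▷ M.X ≫ M.ψ = (ρ_ M.X).inv ≫ M.X ◁ F.unit) ∧
  (M.X ◁ F.comul ≫ (α_ M.X F.E F.E).inv ≫ M.φ ▷ F.E ≫ (α_ F.E M.X F.E).hom ≫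
      F.E ◁ M.φ = M.φ ≫ F.comul ▷ M.X ≫ (α_ F.E F.E M.X).hom) ∧
  (M.φ ≫ F.counit ▷ M.X ≫ (λ_ M.X).hom = M.X ◁ F.counit ≫ (ρ_ M.X).hom) ∧
  (M.ψ ▷ F.E ≫ (α_ M.X F.E F.E).hom ≫ M.X ◁ F.lam ≫ (α_ M.X F.E F.E).inv ≫
      M.φ ▷ F.E
    = (α_ F.E M.X F.E).hom ≫ F.E ◁ M.φ ≫ (α_ F.E F.E M.X).inv ≫ F.lam ▷ M.X ≫
        (α_ F.E F.E M.X).hom ≫ F.E ◁ M.ψ ≫ (α_ F.E M.X F.E).inv)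

/-- Morphisms of (strong) Yetter–Drinfel'd modules: 2-cells which are
simultaneously 2-cells in `Mnd(K)` and in `Comnd(K)`. -/
def IsYDHom {a : K} (F : Bimonad a) (M N : YDData F) (f : M.X ⟶ N.X) : Prop :=
  (M.ψ ≫ f ▷ F.E = F.E ◁ f ≫ N.ψ) ∧ (M.φ ≫ F.E ◁ f = f ▷ F.E ≫ N.φ)

/-- The tensor product (= horizontal composite) of two Yetter–Drinfel'd modules. -/
def ydTensor {a : K} (F : Bimonad a) (M N : YDData F) : YDData F where
  X := M.X ≫ N.X
  ψ := dext' M.ψ N.ψ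
  φ := dext M.φ N.φ

/-- The unit Yetter–Drinfel'd module. -/
def ydUnit {a : K} (F : Bimonad a) : YDData F where
  X := 𝟙 a
  ψ := (ρ_ F.E).hom ≫ (λ_ F.E).inv
  φ := (λ_ F.E).hom ≫ (ρ_ F.E).inv


section Aux

variable {K : Type*} [Bicategory K] {a : K}

lemma psi_mul_stack {E X Y : a ⟶ a} (mul : E ≫ E ⟶ E)
    (ψX : E ≫ X ⟶ X ≫ E) (ψY : E ≫ Y ⟶ Y ≫ E)
    (hX : E ◁ ψX ≫ (α_ E X E).inv ≫ ψX ▷ E ≫ (α_ X E E).hom ≫ X ◁ mul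
        = (α_ E E X).inv ≫ mul ▷ X ≫ ψX)
    (hY : E ◁ ψY ≫ (α_ E Y E).inv ≫ ψY ▷ E ≫ (α_ Y E E).hom ≫ Y ◁ mul
        = (α_ E E Y).inv ≫ mul ▷ Y ≫ ψY) :
    E ◁ dext' ψX ψY ≫ (α_ E (X ≫ Y) E).inv ≫ dext' ψX ψY ▷ E ≫
        (α_ (X ≫ Y) E E).hom ≫ (X ≫ Y) ◁ mul
      = (α_ E E (X ≫ Y)).inv ≫ mul ▷ (X ≫ Y) ≫ dext' ψX ψY := by
  simp only [dext']
  calc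
    _ = 𝟙 _ ⊗≫ E ◁ ψX ▷ Y ⊗≫ ((E ≫ X) ◁ ψY ≫ ψX ▷ (Y ≫ E)) ⊗≫ X ◁ ψY ▷ E ⊗≫
          (X ≫ Y) ◁ mul := by bicategory
    _ = 𝟙 _ ⊗≫ E ◁ ψX ▷ Y ⊗≫ (ψX ▷ (E ≫ Y) ≫ (X ≫ E) ◁ ψY) ⊗≫ X ◁ ψY ▷ E ⊗≫
          (X ≫ Y) ◁ mul := by rw [whisker_exchange]
    _ = 𝟙 _ ⊗≫ E ◁ ψX ▷ Y ⊗≫ ψX ▷ (E ≫ Y) ⊗≫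
          X ◁ (E ◁ ψY ≫ (α_ E Y E).inv ≫ ψY ▷ E ≫ (α_ Y E E).hom ≫ Y ◁ mul) ⊗≫
          𝟙 _ := by bicategory
    _ = 𝟙 _ ⊗≫ E ◁ ψX ▷ Y ⊗≫ ψX ▷ (E ≫ Y) ⊗≫
          X ◁ ((α_ E E Y).inv ≫ mul ▷ Y ≫ ψY) ⊗≫ 𝟙 _ := by rw [hY]
    _ = 𝟙 _ ⊗≫ ((E ◁ ψX ≫ (α_ E X E).inv ≫ ψX ▷ E ≫ (α_ X E E).hom ≫ X ◁ mul) ▷ Y)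
          ⊗≫ X ◁ ψY ⊗≫ 𝟙 _ := by bicategory
    _ = 𝟙 _ ⊗≫ (((α_ E E X).inv ≫ mul ▷ X ≫ ψX) ▷ Y) ⊗≫ X ◁ ψY ⊗≫ 𝟙 _ := by rw [hX]
    _ = _ := by bicategory

lemma psi_unit_stack {E X Y : a ⟶ a} (unit : 𝟙 a ⟶ E)
    (ψX : E ≫ X ⟶ X ≫ E) (ψY : E ≫ Y ⟶ Y ≫ E)
    (hX : (λ_ X).inv ≫ unit ▷ X ≫ ψX = (ρ_ X).inv ≫ X ◁ unit)
    (hY : (λ_ Y).inv ≫ unit ▷ Y ≫ ψY = (ρ_ Y).inv ≫ Y ◁ unit) :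
    (λ_ (X ≫ Y)).inv ≫ unit ▷ (X ≫ Y) ≫ dext' ψX ψY
      = (ρ_ (X ≫ Y)).inv ≫ (X ≫ Y) ◁ unit := by
  simp only [dext']
  calc
    _ = 𝟙 _ ⊗≫ ((λ_ X).inv ≫ unit ▷ X ≫ ψX) ▷ Y ⊗≫ X ◁ ψY ⊗≫ 𝟙 _ := by bicategory
    _ = 𝟙 _ ⊗≫ ((ρ_ X).inv ≫ X ◁ unit) ▷ Y ⊗≫ X ◁ ψY ⊗≫ 𝟙 _ := by rw [hX]
    _ = 𝟙 _ ⊗≫ X ◁ ((λ_ Y).inv ≫ unit ▷ Y ≫ ψY) ⊗≫ 𝟙 _ := by bicategory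
    _ = 𝟙 _ ⊗≫ X ◁ ((ρ_ Y).inv ≫ Y ◁ unit) ⊗≫ 𝟙 _ := by rw [hY]
    _ = _ := by bicategory

lemma phi_comul_stack {E X Y : a ⟶ a} (comul : E ⟶ E ≫ E)
    (φX : X ≫ E ⟶ E ≫ X) (φY : Y ≫ E ⟶ E ≫ Y)
    (hX : X ◁ comul ≫ (α_ X E E).inv ≫ φX ▷ E ≫ (α_ E X E).hom ≫ E ◁ φX
        = φX ≫ comul ▷ X ≫ (α_ E E X).hom)
    (hY : Y ◁ comul ≫ (α_ Y E E).inv ≫ φY ▷ E ≫ (α_ E Y E).hom ≫ E ◁ φY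
        = φY ≫ comul ▷ Y ≫ (α_ E E Y).hom) :
    (X ≫ Y) ◁ comul ≫ (α_ (X ≫ Y) E E).inv ≫ dext φX φY ▷ E ≫
        (α_ E (X ≫ Y) E).hom ≫ E ◁ dext φX φY
      = dext φX φY ≫ comul ▷ (X ≫ Y) ≫ (α_ E E (X ≫ Y)).hom := by
  simp only [dext]
  calc
    _ = 𝟙 _ ⊗≫ X ◁ Y ◁ comul ⊗≫ X ◁ φY ▷ E ⊗≫
          (φX ▷ (Y ≫ E) ≫ (E ≫ X) ◁ φY) ⊗≫ E ◁ φX ▷ Y ⊗≫ 𝟙 _ := by bicategory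
    _ = 𝟙 _ ⊗≫ X ◁ Y ◁ comul ⊗≫ X ◁ φY ▷ E ⊗≫
          ((X ≫ E) ◁ φY ≫ φX ▷ (E ≫ Y)) ⊗≫ E ◁ φX ▷ Y ⊗≫ 𝟙 _ := by
      rw [← whisker_exchange φX φY]
    _ = 𝟙 _ ⊗≫ X ◁ (Y ◁ comul ≫ (α_ Y E E).inv ≫ φY ▷ E ≫ (α_ E Y E).hom ≫ E ◁ φY)
          ⊗≫ φX ▷ (E ≫ Y) ⊗≫ E ◁ φX ▷ Y ⊗≫ 𝟙 _ := by bicategory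
    _ = 𝟙 _ ⊗≫ X ◁ (φY ≫ comul ▷ Y ≫ (α_ E E Y).hom)
          ⊗≫ φX ▷ (E ≫ Y) ⊗≫ E ◁ φX ▷ Y ⊗≫ 𝟙 _ := by rw [hY]
    _ = 𝟙 _ ⊗≫ X ◁ φY ⊗≫
          ((X ◁ comul ≫ (α_ X E E).inv ≫ φX ▷ E ≫ (α_ E X E).hom ≫ E ◁ φX) ▷ Y)
          ⊗≫ 𝟙 _ := by bicategory
    _ = 𝟙 _ ⊗≫ X ◁ φY ⊗≫ ((φX ≫ comul ▷ X ≫ (α_ E E X).hom) ▷ Y) ⊗≫ 𝟙 _ := by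
      rw [hX]
    _ = _ := by bicategory

lemma phi_counit_stack {E X Y : a ⟶ a} (counit : E ⟶ 𝟙 a)
    (φX : X ≫ E ⟶ E ≫ X) (φY : Y ≫ E ⟶ E ≫ Y)
    (hX : φX ≫ counit ▷ X ≫ (λ_ X).hom = X ◁ counit ≫ (ρ_ X).hom)
    (hY : φY ≫ counit ▷ Y ≫ (λ_ Y).hom = Y ◁ counit ≫ (ρ_ Y).hom) :
    dext φX φY ≫ counit ▷ (X ≫ Y) ≫ (λ_ (X ≫ Y)).hom
      = (X ≫ Y) ◁ counit ≫ (ρ_ (X ≫ Y)).hom := by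
  simp only [dext]
  calc
    _ = 𝟙 _ ⊗≫ X ◁ φY ⊗≫ (φX ≫ counit ▷ X ≫ (λ_ X).hom) ▷ Y ⊗≫ 𝟙 _ := by bicategory
    _ = 𝟙 _ ⊗≫ X ◁ φY ⊗≫ (X ◁ counit ≫ (ρ_ X).hom) ▷ Y ⊗≫ 𝟙 _ := by rw [hX]
    _ = 𝟙 _ ⊗≫ X ◁ (φY ≫ counit ▷ Y ≫ (λ_ Y).hom) ⊗≫ 𝟙 _ := by bicategory
    _ = 𝟙 _ ⊗≫ X ◁ (Y ◁ counit ≫ (ρ_ Y).hom) ⊗≫ 𝟙 _ := by rw [hY]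
    _ = _ := by bicategory

lemma compat_stack {E X Y : a ⟶ a} (lam : E ≫ E ⟶ E ≫ E)
    (ψX : E ≫ X ⟶ X ≫ E) (ψY : E ≫ Y ⟶ Y ≫ E)
    (φX : X ≫ E ⟶ E ≫ X) (φY : Y ≫ E ⟶ E ≫ Y)
    (hX : ψX ▷ E ≫ (α_ X E E).hom ≫ X ◁ lam ≫ (α_ X E E).inv ≫ φX ▷ E
        = (α_ E X E).hom ≫ E ◁ φX ≫ (α_ E E X).inv ≫ lam ▷ X ≫
            (α_ E E X).hom ≫ E ◁ ψX ≫ (α_ E X E).inv)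
    (hY : ψY ▷ E ≫ (α_ Y E E).hom ≫ Y ◁ lam ≫ (α_ Y E E).inv ≫ φY ▷ E
        = (α_ E Y E).hom ≫ E ◁ φY ≫ (α_ E E Y).inv ≫ lam ▷ Y ≫
            (α_ E E Y).hom ≫ E ◁ ψY ≫ (α_ E Y E).inv) :
    dext' ψX ψY ▷ E ≫ (α_ (X ≫ Y) E E).hom ≫ (X ≫ Y) ◁ lam ≫
        (α_ (X ≫ Y) E E).inv ≫ dext φX φY ▷ E
      = (α_ E (X ≫ Y) E).hom ≫ E ◁ dext φX φY ≫ (α_ E E (X ≫ Y)).inv ≫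
          lam ▷ (X ≫ Y) ≫ (α_ E E (X ≫ Y)).hom ≫ E ◁ dext' ψX ψY ≫
          (α_ E (X ≫ Y) E).inv := by
  simp only [dext, dext']
  calc
    _ = 𝟙 _ ⊗≫ ψX ▷ (Y ≫ E) ⊗≫
          X ◁ (ψY ▷ E ≫ (α_ Y E E).hom ≫ Y ◁ lam ≫ (α_ Y E E).inv ≫ φY ▷ E) ⊗≫
          φX ▷ (Y ≫ E) ⊗≫ 𝟙 _ := by bicategory
    _ = 𝟙 _ ⊗≫ ψX ▷ (Y ≫ E) ⊗≫
          X ◁ ((α_ E Y E).hom ≫ E ◁ φY ≫ (α_ E E Y).inv ≫ lam ▷ Y ≫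
            (α_ E E Y).hom ≫ E ◁ ψY ≫ (α_ E Y E).inv) ⊗≫
          φX ▷ (Y ≫ E) ⊗≫ 𝟙 _ := by rw [hY]
    _ = 𝟙 _ ⊗≫ (ψX ▷ (Y ≫ E) ≫ (X ≫ E) ◁ φY) ⊗≫ X ◁ lam ▷ Y ⊗≫
          ((X ≫ E) ◁ ψY ≫ φX ▷ (Y ≫ E)) ⊗≫ 𝟙 _ := by bicategory
    _ = 𝟙 _ ⊗≫ ((E ≫ X) ◁ φY ≫ ψX ▷ (E ≫ Y)) ⊗≫ X ◁ lam ▷ Y ⊗≫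
          (φX ▷ (E ≫ Y) ≫ (E ≫ X) ◁ ψY) ⊗≫ 𝟙 _ := by
      rw [← whisker_exchange ψX φY, whisker_exchange φX ψY]
    _ = 𝟙 _ ⊗≫ E ◁ X ◁ φY ⊗≫
          ((ψX ▷ E ≫ (α_ X E E).hom ≫ X ◁ lam ≫ (α_ X E E).inv ≫ φX ▷ E) ▷ Y)
          ⊗≫ (E ≫ X) ◁ ψY ⊗≫ 𝟙 _ := by bicategory
    _ = 𝟙 _ ⊗≫ E ◁ X ◁ φY ⊗≫
          (((α_ E X E).hom ≫ E ◁ φX ≫ (α_ E E X).inv ≫ lam ▷ X ≫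
            (α_ E E X).hom ≫ E ◁ ψX ≫ (α_ E X E).inv) ▷ Y)
          ⊗≫ (E ≫ X) ◁ ψY ⊗≫ 𝟙 _ := by rw [hX]
    _ = _ := by bicategory

lemma homT_psi {E M M' N N' : a ⟶ a} (f : M ⟶ M') (g : N ⟶ N')
    (ψM : E ≫ M ⟶ M ≫ E) (ψM' : E ≫ M' ⟶ M' ≫ E)
    (ψN : E ≫ N ⟶ N ≫ E) (ψN' : E ≫ N' ⟶ N' ≫ E)
    (hf : ψM ≫ f ▷ E = E ◁ f ≫ ψM')
    (hg : ψN ≫ g ▷ E = E ◁ g ≫ ψN') :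
    dext' ψM ψN ≫ (f ▷ N ≫ M' ◁ g) ▷ E
      = E ◁ (f ▷ N ≫ M' ◁ g) ≫ dext' ψM' ψN' := by
  simp only [dext']
  calc
    _ = 𝟙 _ ⊗≫ ψM ▷ N ⊗≫ (M ◁ ψN ≫ f ▷ (N ≫ E)) ⊗≫ M' ◁ g ▷ E ⊗≫ 𝟙 _ := by
      bicategory
    _ = 𝟙 _ ⊗≫ ψM ▷ N ⊗≫ (f ▷ (E ≫ N) ≫ M' ◁ ψN) ⊗≫ M' ◁ g ▷ E ⊗≫ 𝟙 _ := by
      rw [whisker_exchange f ψN]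
    _ = 𝟙 _ ⊗≫ ((ψM ≫ f ▷ E) ▷ N) ⊗≫ M' ◁ (ψN ≫ g ▷ E) ⊗≫ 𝟙 _ := by bicategory
    _ = 𝟙 _ ⊗≫ ((E ◁ f ≫ ψM') ▷ N) ⊗≫ M' ◁ (E ◁ g ≫ ψN') ⊗≫ 𝟙 _ := by
      rw [hf, hg]
    _ = 𝟙 _ ⊗≫ E ◁ f ▷ N ⊗≫ (ψM' ▷ N ≫ (M' ≫ E) ◁ g) ⊗≫ M' ◁ ψN' ⊗≫ 𝟙 _ := by
      bicategory
    _ = 𝟙 _ ⊗≫ E ◁ f ▷ N ⊗≫ ((E ≫ M') ◁ g ≫ ψM' ▷ N') ⊗≫ M' ◁ ψN' ⊗≫ 𝟙 _ := by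
      rw [← whisker_exchange ψM' g]
    _ = _ := by bicategory

lemma homT_phi {E M M' N N' : a ⟶ a} (f : M ⟶ M') (g : N ⟶ N')
    (φM : M ≫ E ⟶ E ≫ M) (φM' : M' ≫ E ⟶ E ≫ M')
    (φN : N ≫ E ⟶ E ≫ N) (φN' : N' ≫ E ⟶ E ≫ N')
    (hf : φM ≫ E ◁ f = f ▷ E ≫ φM')
    (hg : φN ≫ E ◁ g = g ▷ E ≫ φN') :
    dext φM φN ≫ E ◁ (f ▷ N ≫ M' ◁ g)
      = (f ▷ N ≫ M' ◁ g) ▷ E ≫ dext φM' φN' := by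
  simp only [dext]
  calc
    _ = 𝟙 _ ⊗≫ M ◁ φN ⊗≫ ((φM ≫ E ◁ f) ▷ N) ⊗≫ (E ≫ M') ◁ g ⊗≫ 𝟙 _ := by
      bicategory
    _ = 𝟙 _ ⊗≫ M ◁ φN ⊗≫ ((f ▷ E ≫ φM') ▷ N) ⊗≫ (E ≫ M') ◁ g ⊗≫ 𝟙 _ := by
      rw [hf]
    _ = 𝟙 _ ⊗≫ (M ◁ φN ≫ f ▷ (E ≫ N)) ⊗≫ (φM' ▷ N ≫ (E ≫ M') ◁ g) ⊗≫ 𝟙 _ := by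
      bicategory
    _ = 𝟙 _ ⊗≫ (f ▷ (N ≫ E) ≫ M' ◁ φN) ⊗≫ ((M' ≫ E) ◁ g ≫ φM' ▷ N') ⊗≫ 𝟙 _ := by
      rw [whisker_exchange f φN, ← whisker_exchange φM' g]
    _ = 𝟙 _ ⊗≫ f ▷ (N ≫ E) ⊗≫ M' ◁ (φN ≫ E ◁ g) ⊗≫ φM' ▷ N' ⊗≫ 𝟙 _ := by
      bicategory
    _ = 𝟙 _ ⊗≫ f ▷ (N ≫ E) ⊗≫ M' ◁ (g ▷ E ≫ φN') ⊗≫ φM' ▷ N' ⊗≫ 𝟙 _ := by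
      rw [hg]
    _ = _ := by bicategory

end Aux

/-- Let `(A, F, λ)` be a bimonad in a 2-category `K`.  The
composite of two strong Yetter–Drinfel'd modules, with the stacked distributive
laws, is again a strong Yetter–Drinfel'd module; together with the unit object,
the morphism conditions for the coherence 2-cells and the closure of morphisms
under tensoring, this makes the category `^F_F YD_s(K,A) = Bimnd(K)(F)` of strong
Yetter–Drinfel'd modules a monoidal category. -/
theorem strong_yd_monoidal {K : Type*} [Bicategory K] [Bicategory.Strict K]
    {a : K} (F : Bimonad a) :
    (∀ M N : YDData F, IsYDs F M → IsYDs F N → IsYDs F (ydTensor F M N)) ∧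
    IsYDs F (ydUnit F) ∧
    -- the tensor product of morphisms is a morphism
    (∀ (M M' N N' : YDData F) (f : M.X ⟶ M'.X) (g : N.X ⟶ N'.X),
      IsYDs F M → IsYDs F M' → IsYDs F N → IsYDs F N' →
      IsYDHom F M M' f → IsYDHom F N N' g →
      IsYDHom F (ydTensor F M N) (ydTensor F M' N')
        (f ▷ N.X ≫ M'.X ◁ g)) ∧
    -- the coherence 2-cells of `K` are morphisms of Yetter–Drinfel'd modules
    (∀ M N P : YDData F, IsYDs F M → IsYDs F N → IsYDs F P →
      IsYDHom F (ydTensor F (ydTensor F M N) P) (ydTensor F M (ydTensor F N P))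
        (α_ M.X N.X P.X).hom) ∧
    (∀ M : YDData F, IsYDs F M →
      IsYDHom F (ydTensor F (ydUnit F) M) M (λ_ M.X).hom ∧
      IsYDHom F (ydTensor F M (ydUnit F)) M (ρ_ M.X).hom) := by
  refine ⟨?_, ?_, ?_, ?_, ?_⟩
  · rintro M N ⟨hM1, hM2, hM3, hM4, hM5⟩ ⟨hN1, hN2, hN3, hN4, hN5⟩
    exact ⟨psi_mul_stack F.mul M.ψ N.ψ hM1 hN1,
      psi_unit_stack F.unit M.ψ N.ψ hM2 hN2,
      phi_comul_stack F.comul M.φ N.φ hM3 hN3,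
      phi_counit_stack F.counit M.φ N.φ hM4 hN4,
      compat_stack F.lam M.ψ N.ψ M.φ N.φ hM5 hN5⟩
  · refine ⟨?_, ?_, ?_, ?_, ?_⟩ <;> · dsimp only [ydUnit]; bicategory
  · rintro M M' N N' f g - - - - ⟨hf1, hf2⟩ ⟨hg1, hg2⟩
    exact ⟨homT_psi f g M.ψ M'.ψ N.ψ N'.ψ hf1 hg1,
      homT_phi f g M.φ M'.φ N.φ N'.φ hf2 hg2⟩
  · rintro M N P - - -
    constructor <;> · dsimp only [ydTensor]; simp only [dext, dext']; bicategory
  · rintro M -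
    constructor <;> constructor <;>
      · dsimp only [ydTensor, ydUnit]; simp only [dext, dext']; bicategory

end Paper
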